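/- Let E' ⊆ E(G) be a set of edges of the gadget graph G, none incident to u or to v. If Ric_{G−E'}({u,v}) < 0, then the bipartite graph (L_0, R_0, E_0 \ E') has no perfect matching. -/

import Mathlib

open Finset
open scoped Classical

variable {V : Type*}

/-- The open neighborhood of `u` in `G`, as a finset. -/
noncomputable def nbrF [Fintype V] (G : SimpleGraph V) (u : V) : Finset V :=
  Finset.univ.filter fun x => G.Adj u x

/-- The degree of `u` in `G`. -/
noncomputable def degG [Fintype V] (G : SimpleGraph V) (u : V) : ℕ := (nbrF G u).card

/-- The closed neighborhood `N[u]` of `u` in `G`. -/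
noncomputable def cnbr [Fintype V] (G : SimpleGraph V) (u : V) : Finset V :=
  insert u (nbrF G u)

/-- A transport plan for `(G,u,v)`: nonnegative, with row sums `1/(deg u + 1)` over
`N[u]` and column sums `1/(deg v + 1)` over `N[v]`. -/
def IsPlanG [Fintype V] (G : SimpleGraph V) (u v : V) (z : V → V → ℝ) : Prop :=
  (∀ x y, 0 ≤ z x y) ∧
  (∀ x ∈ cnbr G u, ∑ y ∈ cnbr G v, z x y = 1 / ((degG G u : ℝ) + 1)) ∧
  (∀ y ∈ cnbr G v, ∑ x ∈ cnbr G u, z x y = 1 / ((degG G v : ℝ) + 1))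

/-- The cost of a transport plan, with respect to shortest-path distance in `G`. -/
noncomputable def planCostG [Fintype V] (G : SimpleGraph V) (u v : V) (z : V → V → ℝ) : ℝ :=
  ∑ x ∈ cnbr G u, ∑ y ∈ cnbr G v, (G.dist x y : ℝ) * z x y

/-- The earth mover's distance `EMD_G(u,v)`: the minimum cost of a transport plan. -/
noncomputable def EMDG [Fintype V] (G : SimpleGraph V) (u v : V) : ℝ :=
  sInf {t | ∃ z, IsPlanG G u v z ∧ planCostG G u v z = t}

/-- The Ollivier–Ricci curvature of the edge `{u,v}`. -/
noncomputable def RicG [Fintype V] (G : SimpleGraph V) (u v : V) : ℝ :=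
  1 - EMDG G u v

/-- The five extra vertices `u, v, p, p', x` of the gadget graph. -/
inductive Extra where
  | u | v | p | p' | x
deriving DecidableEq

instance : Fintype Extra where
  elems := {Extra.u, Extra.v, Extra.p, Extra.p', Extra.x}
  complete := by intro a; cases a <;> simp

/-- The vertex set of the gadget graph: `L ⊔ R ⊔ {u,v,p,p',x}`. -/
abbrev GV (L R : Type*) := (L ⊕ R) ⊕ Extra

/-- The base edge relation of the gadget graph built from the bipartite graph
`H₀ = (L, R, E₀)`: the edge `{u,v}`; `{u,a}` for `a ∈ L`; `{v,b}` for `b ∈ R`;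
`{u,p}`; `{v,p'}`; `{p,x}`; `{p',x}`; and `{a,b}` whenever `E₀ a b`. -/
def gadgetRel {L R : Type*} (E0 : L → R → Prop) : GV L R → GV L R → Prop
  | Sum.inr .u, Sum.inr .v => True
  | Sum.inr .u, Sum.inl (Sum.inl _) => True
  | Sum.inr .v, Sum.inl (Sum.inr _) => True
  | Sum.inr .u, Sum.inr .p => True
  | Sum.inr .v, Sum.inr .p' => True
  | Sum.inr .p, Sum.inr .x => True
  | Sum.inr .p', Sum.inr .x => True
  | Sum.inl (Sum.inl a), Sum.inl (Sum.inr b) => E0 a b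
  | _, _ => False

/-- The gadget graph. -/
def gadget {L R : Type*} (E0 : L → R → Prop) : SimpleGraph (GV L R) :=
  SimpleGraph.fromRel (gadgetRel E0)


theorem gadget_adj_u' {L R : Type*} (E0 : L → R → Prop) (w : GV L R) :
    (gadget E0).Adj (Sum.inr Extra.u) w ↔
      (w = Sum.inr Extra.v ∨ w = Sum.inr Extra.p ∨ ∃ a : L, w = Sum.inl (Sum.inl a)) := by
  rcases w with (a | b) | e
  · simp [gadget, gadgetRel, SimpleGraph.fromRel_adj]
  · simp [gadget, gadgetRel, SimpleGraph.fromRel_adj]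
  · cases e <;> simp [gadget, gadgetRel, SimpleGraph.fromRel_adj]

theorem gadget_adj_v' {L R : Type*} (E0 : L → R → Prop) (w : GV L R) :
    (gadget E0).Adj (Sum.inr Extra.v) w ↔
      (w = Sum.inr Extra.u ∨ w = Sum.inr Extra.p' ∨ ∃ b : R, w = Sum.inl (Sum.inr b)) := by
  rcases w with (a | b) | e
  · simp [gadget, gadgetRel, SimpleGraph.fromRel_adj]
  · simp [gadget, gadgetRel, SimpleGraph.fromRel_adj]
  · cases e <;> simp [gadget, gadgetRel, SimpleGraph.fromRel_adj]

set_option maxHeartbeats 2000000 in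
/-- let `G'` be obtained from the gadget graph by deleting a set of edges
none of which is incident to `u` or to `v` (i.e. `G' ≤ gadget E₀` and every edge of the
gadget graph incident to `u` or `v` is still an edge of `G'`).  If `Ric_{G'}({u,v}) < 0`
then the bipartite graph `(L, R, E₀ \ E')` has no perfect matching. -/
theorem stmt16 {L R : Type*} [Fintype L] [Fintype R] (n : ℕ) (hn : 1 ≤ n)
    (hL : Fintype.card L = n) (hR : Fintype.card R = n)
    (E0 : L → R → Prop)
    (G' : SimpleGraph (GV L R)) (hle : G' ≤ gadget E0)
    (hkeep : ∀ x y : GV L R, (gadget E0).Adj x y →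
      (x = Sum.inr Extra.u ∨ x = Sum.inr Extra.v ∨
       y = Sum.inr Extra.u ∨ y = Sum.inr Extra.v) → G'.Adj x y)
    (hneg : RicG G' (Sum.inr Extra.u) (Sum.inr Extra.v) < 0) :
    ¬ ∃ f : L ≃ R, ∀ a : L, G'.Adj (Sum.inl (Sum.inl a)) (Sum.inl (Sum.inr (f a))) := by

  rintro ⟨f, hf⟩
  classical
  set U : GV L R := Sum.inr Extra.u with hUdef
  set Vv : GV L R := Sum.inr Extra.v with hVdef
  set P : GV L R := Sum.inr Extra.p with hPdef
  set P' : GV L R := Sum.inr Extra.p' with hP'def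
  -- adjacency at u and v
  have hadjU : ∀ w, G'.Adj U w ↔ (w = Vv ∨ w = P ∨ ∃ a : L, w = Sum.inl (Sum.inl a)) := by
    intro w
    rw [hUdef, hVdef, hPdef]
    constructor
    · intro h
      exact (gadget_adj_u' E0 w).1 (hle h)
    · intro h
      exact hkeep _ _ ((gadget_adj_u' E0 w).2 h) (Or.inl rfl)
  have hadjV : ∀ w, G'.Adj Vv w ↔ (w = U ∨ w = P' ∨ ∃ b : R, w = Sum.inl (Sum.inr b)) := by
    intro w
    rw [hUdef, hVdef, hP'def]
    constructor
    · intro h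
      exact (gadget_adj_v' E0 w).1 (hle h)
    · intro h
      exact hkeep _ _ ((gadget_adj_v' E0 w).2 h) (Or.inr (Or.inl rfl))
  -- explicit neighborhoods
  set mL : Finset (GV L R) := Finset.univ.image (fun a : L => Sum.inl (Sum.inl a)) with hmL
  set mR : Finset (GV L R) := Finset.univ.image (fun b : R => Sum.inl (Sum.inr b)) with hmR
  have hnbrU : nbrF G' U = mL ∪ {Vv, P} := by
    ext w
    simp only [nbrF, Finset.mem_filter, Finset.mem_univ, true_and, hadjU w, hmL,
      Finset.mem_union, Finset.mem_image, Finset.mem_insert, Finset.mem_singleton]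
    tauto
  have hnbrV : nbrF G' Vv = mR ∪ {U, P'} := by
    ext w
    simp only [nbrF, Finset.mem_filter, Finset.mem_univ, true_and, hadjV w, hmR,
      Finset.mem_union, Finset.mem_image, Finset.mem_insert, Finset.mem_singleton]
    tauto
  have hinjL : Function.Injective (fun a : L => (Sum.inl (Sum.inl a) : GV L R)) := by
    intro a b h; simpa using h
  have hinjR : Function.Injective (fun b : R => (Sum.inl (Sum.inr b) : GV L R)) := by
    intro a b h; simpa using h
  have hcardL : mL.card = n := by
    rw [hmL, Finset.card_image_of_injective _ hinjL, Finset.card_univ, hL]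
  have hcardR : mR.card = n := by
    rw [hmR, Finset.card_image_of_injective _ hinjR, Finset.card_univ, hR]
  have hdisjU : Disjoint mL ({Vv, P} : Finset (GV L R)) := by
    rw [Finset.disjoint_left]
    rintro w hw hw'
    simp [hmL] at hw
    obtain ⟨a, rfl⟩ := hw
    simp [hVdef, hPdef] at hw'
  have hdisjV : Disjoint mR ({U, P'} : Finset (GV L R)) := by
    rw [Finset.disjoint_left]
    rintro w hw hw'
    simp [hmR] at hw
    obtain ⟨b, rfl⟩ := hw
    simp [hUdef, hP'def] at hw'
  have hVP : Vv ≠ P := by simp [hVdef, hPdef]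
  have hUP' : U ≠ P' := by simp [hUdef, hP'def]
  have hdegU : degG G' U = n + 2 := by
    rw [degG, hnbrU, Finset.card_union_of_disjoint hdisjU, hcardL,
      Finset.card_insert_of_notMem (by simpa using hVP), Finset.card_singleton]
  have hdegV : degG G' Vv = n + 2 := by
    rw [degG, hnbrV, Finset.card_union_of_disjoint hdisjV, hcardR,
      Finset.card_insert_of_notMem (by simpa using hUP'), Finset.card_singleton]
  have hUnotin : U ∉ mL ∪ ({Vv, P} : Finset (GV L R)) := by
    simp [hmL, hUdef, hVdef, hPdef]
  have hVnotin : Vv ∉ mR ∪ ({U, P'} : Finset (GV L R)) := by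
    simp [hmR, hUdef, hVdef, hP'def]
  have hcU : cnbr G' U = insert U (mL ∪ {Vv, P}) := by rw [cnbr, hnbrU]; ext w; simp
  have hcV : cnbr G' Vv = insert Vv (mR ∪ {U, P'}) := by rw [cnbr, hnbrV]; ext w; simp
  -- the bijection σ
  set σ : GV L R ≃ GV L R :=
    Equiv.sumCongr ((f.sumCongr f.symm).trans (Equiv.sumComm R L)) (Equiv.swap Extra.p Extra.p')
    with hσ
  have hσU : σ U = U := by simp [hσ, hUdef, Equiv.swap_apply_of_ne_of_ne]
  have hσV : σ Vv = Vv := by simp [hσ, hVdef, Equiv.swap_apply_of_ne_of_ne]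
  have hσP : σ P = P' := by simp [hσ, hPdef, hP'def]
  have hσa : ∀ a : L, σ (Sum.inl (Sum.inl a)) = Sum.inl (Sum.inr (f a)) := by
    intro a; simp [hσ]
  have hmemU : ∀ x, x ∈ cnbr G' U ↔ (x = U ∨ x = Vv ∨ x = P ∨ ∃ a : L, x = Sum.inl (Sum.inl a)) := by
    intro x
    simp only [hcU, Finset.mem_insert, Finset.mem_union, hmL, Finset.mem_image,
      Finset.mem_univ, true_and, Finset.mem_singleton]
    tauto
  have hmemV : ∀ y, y ∈ cnbr G' Vv ↔ (y = Vv ∨ y = U ∨ y = P' ∨ ∃ b : R, y = Sum.inl (Sum.inr b)) := by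
    intro y
    simp only [hcV, Finset.mem_insert, Finset.mem_union, hmR, Finset.mem_image,
      Finset.mem_univ, true_and, Finset.mem_singleton]
    tauto
  have hσmap : ∀ x ∈ cnbr G' U, σ x ∈ cnbr G' Vv := by
    intro x hx
    rcases (hmemU x).1 hx with rfl | rfl | rfl | ⟨a, rfl⟩
    · rw [hσU]; exact (hmemV U).2 (Or.inr (Or.inl rfl))
    · rw [hσV]; exact (hmemV Vv).2 (Or.inl rfl)
    · rw [hσP]; exact (hmemV P').2 (Or.inr (Or.inr (Or.inl rfl)))
    · rw [hσa]; exact (hmemV _).2 (Or.inr (Or.inr (Or.inr ⟨f a, rfl⟩)))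
  have hσmap' : ∀ y ∈ cnbr G' Vv, σ.symm y ∈ cnbr G' U := by
    intro y hy
    rcases (hmemV y).1 hy with rfl | rfl | rfl | ⟨b, rfl⟩
    · rw [show Vv = σ Vv from hσV.symm, Equiv.symm_apply_apply]
      exact (hmemU Vv).2 (Or.inr (Or.inl rfl))
    · rw [show U = σ U from hσU.symm, Equiv.symm_apply_apply]
      exact (hmemU U).2 (Or.inl rfl)
    · rw [show P' = σ P from hσP.symm, Equiv.symm_apply_apply]
      exact (hmemU P).2 (Or.inr (Or.inr (Or.inl rfl)))
    · rw [show (Sum.inl (Sum.inr b) : GV L R) = σ (Sum.inl (Sum.inl (f.symm b))) from by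
        rw [hσa]; simp, Equiv.symm_apply_apply]
      exact (hmemU _).2 (Or.inr (Or.inr (Or.inr ⟨f.symm b, rfl⟩)))
  -- the transport plan
  set c : ℝ := 1 / ((n : ℝ) + 3) with hc
  have hc0 : 0 ≤ c := by positivity
  set z : GV L R → GV L R → ℝ := fun x y => if y = σ x then c else 0 with hz
  have hplan : IsPlanG G' U Vv z := by
    refine ⟨fun x y => ?_, fun x hx => ?_, fun y hy => ?_⟩
    · rw [hz]; dsimp only; split <;> [exact hc0; exact le_rfl]
    · rw [hdegU]
      have : ∑ y ∈ cnbr G' Vv, z x y = if σ x ∈ cnbr G' Vv then c else 0 := by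
        rw [hz]; exact Finset.sum_ite_eq' _ _ _
      rw [this, if_pos (hσmap x hx), hc]
      push_cast
      ring_nf
    · rw [hdegV]
      have h1 : ∑ x ∈ cnbr G' U, z x y = ∑ x ∈ cnbr G' U, if x = σ.symm y then c else 0 := by
        refine Finset.sum_congr rfl fun x _ => ?_
        rw [hz]; dsimp only
        congr 1
        exact propext (by rw [Equiv.eq_symm_apply]; exact eq_comm)
      rw [h1, Finset.sum_ite_eq' _ _ _, if_pos (hσmap' y hy), hc]
      push_cast
      ring_nf
  -- cost bound
  have hdistU : (G'.dist U (σ U) : ℝ) = 0 := by rw [hσU]; simp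
  have hdistV : (G'.dist Vv (σ Vv) : ℝ) = 0 := by rw [hσV]; simp
  have hdistP : (G'.dist P (σ P) : ℝ) ≤ 3 := by
    rw [hσP]
    have h1 : G'.Adj P U := ((hadjU P).2 (Or.inr (Or.inl rfl))).symm
    have h2 : G'.Adj U Vv := (hadjU Vv).2 (Or.inl rfl)
    have h3 : G'.Adj Vv P' := (hadjV P').2 (Or.inr (Or.inl rfl))
    have := SimpleGraph.dist_le (SimpleGraph.Walk.cons h1 (SimpleGraph.Walk.cons h2 (SimpleGraph.Walk.cons h3 SimpleGraph.Walk.nil)))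
    have h4 : G'.dist P P' ≤ 3 := by simpa using this
    exact_mod_cast h4
  have hdista : ∀ a : L, (G'.dist (Sum.inl (Sum.inl a)) (σ (Sum.inl (Sum.inl a))) : ℝ) ≤ 1 := by
    intro a
    rw [hσa]
    have := SimpleGraph.dist_le (SimpleGraph.Walk.cons (hf a) SimpleGraph.Walk.nil)
    have h4 : G'.dist (Sum.inl (Sum.inl a)) (Sum.inl (Sum.inr (f a))) ≤ 1 := by simpa using this
    exact_mod_cast h4
  have hcost : planCostG G' U Vv z ≤ 1 := by
    have hinner : ∀ x ∈ cnbr G' U,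
        ∑ y ∈ cnbr G' Vv, (G'.dist x y : ℝ) * z x y = (G'.dist x (σ x) : ℝ) * c := by
      intro x hx
      have : ∀ y, (G'.dist x y : ℝ) * z x y = if y = σ x then (G'.dist x y : ℝ) * c else 0 := by
        intro y; rw [hz]; dsimp only; split <;> simp
      rw [Finset.sum_congr rfl fun y _ => this y, Finset.sum_ite_eq' _ _ _,
        if_pos (hσmap x hx)]
    rw [planCostG, Finset.sum_congr rfl hinner, hcU,
      Finset.sum_insert hUnotin, Finset.sum_union hdisjU, hmL,
      Finset.sum_image (fun a _ b _ h => hinjL h),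
      Finset.sum_pair hVP]
    have hbound : ∑ a : L, (G'.dist (Sum.inl (Sum.inl a)) (σ (Sum.inl (Sum.inl a))) : ℝ) * c
        ≤ (n : ℝ) * c := by
      calc ∑ a : L, (G'.dist (Sum.inl (Sum.inl a)) (σ (Sum.inl (Sum.inl a))) : ℝ) * c
          ≤ ∑ _a : L, c := Finset.sum_le_sum fun a _ => by
            calc (G'.dist (Sum.inl (Sum.inl a)) (σ (Sum.inl (Sum.inl a))) : ℝ) * c
                ≤ 1 * c := mul_le_mul_of_nonneg_right (hdista a) hc0
              _ = c := one_mul c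
        _ = (n : ℝ) * c := by rw [Finset.sum_const, Finset.card_univ, hL, nsmul_eq_mul]
    have hPterm : (G'.dist P (σ P) : ℝ) * c ≤ 3 * c :=
      mul_le_mul_of_nonneg_right hdistP hc0
    rw [hdistU, hdistV]
    have hne : (n:ℝ) + 3 ≠ 0 := by positivity
    have : (0:ℝ) * c + (∑ a : L, (G'.dist (Sum.inl (Sum.inl a)) (σ (Sum.inl (Sum.inl a))) : ℝ) * c
        + ((0:ℝ) * c + (G'.dist P (σ P) : ℝ) * c)) ≤ 0 * c + ((n:ℝ) * c + (0 * c + 3 * c)) := by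
      gcongr
    refine this.trans ?_
    rw [hc]
    field_simp
    linarith
  -- conclude
  have hbdd : BddBelow {t | ∃ z, IsPlanG G' U Vv z ∧ planCostG G' U Vv z = t} := by
    refine ⟨0, ?_⟩
    rintro t ⟨z', hz', rfl⟩
    refine Finset.sum_nonneg fun x _ => Finset.sum_nonneg fun y _ => ?_
    exact mul_nonneg (Nat.cast_nonneg _) (hz'.1 x y)
  have hmem : planCostG G' U Vv z ∈ {t | ∃ z, IsPlanG G' U Vv z ∧ planCostG G' U Vv z = t} :=
    ⟨z, hplan, rfl⟩
  have hEMD : EMDG G' U Vv ≤ 1 := le_trans (csInf_le hbdd hmem) hcost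
  rw [RicG] at hneg
  linarith
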